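/- Let X be a real Banach space and let F ⊆ X** be a finite-dimensional linear subspace of the bidual such that the pre-annihilator F₀ = {ℓ ∈ X* : f(ℓ) = 0 for all f ∈ F} is weak-star closed in X* (closed in the topology of pointwise convergence on X). Let V = (F₀)₀ = {x ∈ X : ℓ(x) = 0 for all ℓ ∈ F₀}. Then dim(V) = dim(F) and λ(V, X) = λ(F, X**), where λ denotes the relative projection constant. -/

import Mathlib

open NormedSpace

noncomputable section

/-- The annihilator of a subspace `W ⊆ E` in the continuous dual `E*`. -/
def ann {E : Type*} [NormedAddCommGroup E] [NormedSpace ℝ E]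
    (W : Submodule ℝ E) : Submodule ℝ (StrongDual ℝ E) where
  carrier := {ℓ | ∀ w ∈ W, ℓ w = 0}
  add_mem' := by
    intro a b ha hb w hw
    simp [ha w hw, hb w hw]
  zero_mem' := by
    intro w hw
    simp
  smul_mem' := by
    intro c ℓ hℓ w hw
    simp [hℓ w hw]

/-- The pre-annihilator of a subspace `H ⊆ E*` in `E`. -/
def preAnn {E : Type*} [NormedAddCommGroup E] [NormedSpace ℝ E]
    (H : Submodule ℝ (StrongDual ℝ E)) : Submodule ℝ E where
  carrier := {x | ∀ ℓ ∈ H, ℓ x = 0}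
  add_mem' := by
    intro a b ha hb ℓ hℓ
    simp [ha ℓ hℓ, hb ℓ hℓ]
  zero_mem' := by
    intro ℓ hℓ
    simp
  smul_mem' := by
    intro c x hx ℓ hℓ
    simp [hx ℓ hℓ]

/-- A subspace of the continuous dual is weak-star closed if its image in `WeakDual ℝ E`
(the dual with the topology of pointwise convergence on `E`) is closed. -/
def IsWeakStarClosed {E : Type*} [NormedAddCommGroup E] [NormedSpace ℝ E]
    (H : Submodule ℝ (StrongDual ℝ E)) : Prop :=
  IsClosed (StrongDual.toWeakDual '' (H : Set (StrongDual ℝ E)))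

/-- The relative projection constant of a subspace `W` of a normed space `Y`:
the infimum of the operator norms of continuous linear projections of `Y` onto `W`. -/
def relProjConst {Y : Type*} [NormedAddCommGroup Y] [NormedSpace ℝ Y]
    (W : Submodule ℝ Y) : ℝ :=
  sInf {c | ∃ P : Y →L[ℝ] Y, P.comp P = P ∧ LinearMap.range (P : Y →ₗ[ℝ] Y) = W ∧ ‖P‖ = c}

end


section Aux

open Topology

variable {E : Type*} [NormedAddCommGroup E] [NormedSpace ℝ E]

/-- Every continuous linear functional on the weak-star dual is an evaluation. -/
theorem weakDual_clm_eq_eval (φ : WeakDual ℝ E →L[ℝ] ℝ) :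
    ∃ x : E, ∀ ℓ : WeakDual ℝ E, φ ℓ = ℓ x := by
  classical
  have hb := LinearMap.hasBasis_weakBilin (topDualPairing ℝ E)
  have h1 : φ ⁻¹' Metric.ball (0 : ℝ) 1 ∈ 𝓝 (0 : WeakDual ℝ E) := by
    have : Metric.ball (0 : ℝ) 1 ∈ 𝓝 (φ 0) := by
      simp [Metric.ball_mem_nhds]
    exact φ.continuous.continuousAt.preimage_mem_nhds this
  obtain ⟨U, hU, hUsub⟩ := hb.mem_iff.mp h1
  obtain ⟨s, r, hr, rfl⟩ := SeminormFamily.basisSets_iff _ |>.mp hU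
  -- key: any ℓ vanishing on all points of s is killed by φ
  have key : ∀ ℓ : WeakDual ℝ E, (∀ x ∈ s, ℓ x = 0) → φ ℓ = 0 := by
    intro ℓ hℓ
    by_contra hne
    have h0 : (s.sup ((topDualPairing ℝ E).toSeminormFamily)) ℓ = 0 := by
      refine le_antisymm (Seminorm.finset_sup_apply_le le_rfl fun i hi => ?_) (apply_nonneg _ _)
      show ‖(ℓ : StrongDual ℝ E) i‖ ≤ 0
      exact norm_le_zero_iff.mpr (hℓ i hi)
    have hmem : ∀ t : ℝ, (t • ℓ) ∈ (s.sup ((topDualPairing ℝ E).toSeminormFamily)).ball 0 r := by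
      intro t
      have hlt' : (s.sup ((topDualPairing ℝ E).toSeminormFamily)) (t • ℓ) < r := by
        calc _ = ‖t‖ * (s.sup ((topDualPairing ℝ E).toSeminormFamily)) ℓ :=
              map_smul_eq_mul _ t ℓ
          _ < r := by rw [h0, mul_zero]; exact hr
      exact (Seminorm.mem_ball_zero _).mpr hlt'
    have hlt : ∀ t : ℝ, |t| * |φ ℓ| < 1 := by
      intro t
      have := hUsub (hmem t)
      simpa [Real.norm_eq_abs, abs_mul] using (show φ (t • ℓ) ∈ Metric.ball (0:ℝ) 1 from this)
    have h2 := hlt ((2 : ℝ) / |φ ℓ|)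
    have hφ : 0 < |φ ℓ| := abs_pos.mpr hne
    rw [abs_div, abs_abs, abs_two, div_mul_cancel₀ _ (ne_of_gt hφ)] at h2
    norm_num at h2
  -- hence φ is in the span of the evaluations at points of s
  set L : s → (WeakDual ℝ E) →ₗ[ℝ] ℝ := fun i =>
    { toFun := fun ℓ => ℓ i.1
      map_add' := fun a b => rfl
      map_smul' := fun c a => rfl }
  have hker : ⨅ i : s, LinearMap.ker (L i) ≤ LinearMap.ker
      (ContinuousLinearMap.coeLM ℝ φ) := by
    intro ℓ hℓ
    simp only [Submodule.mem_iInf, LinearMap.mem_ker] at hℓ ⊢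
    exact key ℓ fun x hx => hℓ ⟨x, hx⟩
  have hspan := mem_span_of_iInf_ker_le_ker hker
  obtain ⟨c, hc⟩ := (Submodule.mem_span_range_iff_exists_fun ℝ).mp hspan
  refine ⟨∑ i : s, c i • i.1, fun ℓ => ?_⟩
  have h4 := LinearMap.congr_fun hc ℓ
  simp only [LinearMap.coe_sum, Finset.sum_apply, LinearMap.smul_apply] at h4
  have h3 : φ ℓ = ∑ x : s, c x • (L x) ℓ := h4.symm
  rw [h3, map_sum]
  refine Finset.sum_congr rfl fun i _ => ?_
  simp only [L, LinearMap.coe_mk, AddHom.coe_mk, smul_eq_mul, map_smul, smul_eq_mul]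
  rfl


instance : LocallyConvexSpace ℝ (WeakDual ℝ E) :=
  WeakBilin.locallyConvexSpace (B := topDualPairing ℝ E)

instance weakDual_separatingDual : SeparatingDual ℝ (WeakDual ℝ E) := by
  constructor
  intro f hf
  have hex : ∃ x : E, f x ≠ 0 := by
    by_contra h
    push_neg at h
    exact hf (DFunLike.ext _ _ h)
  obtain ⟨x, hx⟩ := hex
  let φlin : WeakDual ℝ E →ₗ[ℝ] ℝ :=
    { toFun := fun m => m x
      map_add' := fun a b => rfl
      map_smul' := fun c a => rfl }
  exact ⟨⟨φlin, WeakDual.eval_continuous x⟩, hx⟩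

/-- Separation: a weak-star closed subspace contains every functional vanishing on its
pre-annihilator. -/
theorem mem_of_weakStarClosed {H : Submodule ℝ (StrongDual ℝ E)} (h : IsWeakStarClosed H)
    {ℓ : StrongDual ℝ E} (hℓ : ∀ x ∈ preAnn H, ℓ x = 0) : ℓ ∈ H := by
  by_contra hmem
  set s : Set (WeakDual ℝ E) := StrongDual.toWeakDual '' (H : Set (StrongDual ℝ E)) with hs
  have hconv : Convex ℝ s :=
    (H.convex).linear_image (StrongDual.toWeakDual (𝕜 := ℝ) (E := E)).toLinearMap
  have hx : StrongDual.toWeakDual ℓ ∉ s := by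
    rintro ⟨m, hm, hme⟩
    exact hmem ((StrongDual.toWeakDual.injective hme) ▸ hm)
  obtain ⟨f, u, hfu, hufx⟩ := geometric_hahn_banach_closed_point hconv h hx
  -- f vanishes on s
  have hvan : ∀ a ∈ s, f a = 0 := by
    rintro a ⟨m, hm, rfl⟩
    by_contra hne
    have hmem2 : StrongDual.toWeakDual (((u + 1) / f (StrongDual.toWeakDual m)) • m) ∈ s :=
      ⟨_, H.smul_mem _ hm, rfl⟩
    have := hfu _ hmem2
    rw [map_smul, map_smul, smul_eq_mul, div_mul_cancel₀ _ hne] at this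
    linarith
  have hu : 0 < u := by
    have h0 : (0 : WeakDual ℝ E) ∈ s := ⟨0, H.zero_mem, map_zero _⟩
    have := hfu _ h0
    rwa [map_zero] at this
  obtain ⟨x, hxeval⟩ := weakDual_clm_eq_eval f
  have hxpre : x ∈ preAnn H := by
    intro m hm
    have := hvan _ ⟨m, hm, rfl⟩
    rwa [hxeval] at this
  have : f (StrongDual.toWeakDual ℓ) = 0 := by
    rw [hxeval]
    exact hℓ x hxpre
  rw [this] at hufx
  linarith

/-- Finite-dimensional bipolar theorem: for a finite-dimensional subspace `F` of a dual space,
the annihilator of the pre-annihilator of `F` is `F` itself. -/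
theorem ann_preAnn_eq_of_finiteDimensional (F : Submodule ℝ (StrongDual ℝ E))
    [FiniteDimensional ℝ F] : ann (preAnn F) = F := by
  apply le_antisymm
  · intro f hf
    by_contra hfF
    -- pass to the finite-dimensional subspace G = F ⊔ span {f}
    set G : Submodule ℝ (StrongDual ℝ E) := F ⊔ Submodule.span ℝ {f} with hG
    haveI : FiniteDimensional ℝ G := by
      apply Submodule.finiteDimensional_sup
    letI : AddCommGroup G := Submodule.addCommGroup (M := StrongDual ℝ E) G
    set fG : G := ⟨f, Submodule.mem_sup_right (Submodule.mem_span_singleton_self f)⟩ with hfG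
    set F' : Submodule ℝ G := F.comap G.subtype with hF'
    have hfG' : fG ∉ F' := by
      intro h
      exact hfF h
    -- a linear functional on G vanishing on F and nonzero at f
    have hq0 : Submodule.Quotient.mk (p := F') fG ≠ 0 := by
      rw [Ne, Submodule.Quotient.mk_eq_zero]
      exact hfG'
    have hex : ∃ χ : Module.Dual ℝ (G ⧸ F'), χ (Submodule.Quotient.mk fG) ≠ 0 := by
      by_contra h
      push_neg at h
      exact hq0 ((Module.forall_dual_apply_eq_zero_iff ℝ _).mp h)
    obtain ⟨χ, hχ⟩ := hex
    set ψ : Module.Dual ℝ G := χ ∘ₗ F'.mkQ with hψ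
    -- extend ψ to a weak-star continuous functional using separating duality
    set j : G →ₗ[ℝ] WeakDual ℝ E :=
      (StrongDual.toWeakDual (𝕜 := ℝ) (E := E)).toLinearMap ∘ₗ G.subtype with hj
    have hjinj : Function.Injective j := by
      intro a b hab
      exact Subtype.ext (StrongDual.toWeakDual.injective hab)
    have hsurj := (SeparatingDual.dualMap_surjective_iff (R := ℝ)
      (V := WeakDual ℝ E) (f := j)).mpr hjinj
    obtain ⟨φ, hφ⟩ := hsurj ψ
    obtain ⟨x, hxeval⟩ := weakDual_clm_eq_eval φ
    have hφj : ∀ g : G, φ (j g) = ψ g := fun g => LinearMap.congr_fun hφ g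
    have hgx : ∀ g : G, (g : StrongDual ℝ E) x = ψ g := by
      intro g
      have := hφj g
      rwa [hxeval] at this
    have hxpre : x ∈ preAnn F := by
      intro m hm
      have h1 := hgx ⟨m, Submodule.mem_sup_left hm⟩
      have h2 : ψ ⟨m, Submodule.mem_sup_left hm⟩ = 0 := by
        rw [hψ]
        simp only [LinearMap.comp_apply]
        have : F'.mkQ ⟨m, Submodule.mem_sup_left hm⟩ = 0 := by
          rw [Submodule.mkQ_apply, Submodule.Quotient.mk_eq_zero]
          exact hm
        rw [this, map_zero]
      rwa [h2] at h1
    have hfx : f x ≠ 0 := by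
      have h1 := hgx fG
      rw [hψ] at h1
      simpa using h1.trans_ne hχ
    exact hfx (hf x hxpre)
  · intro f hf ℓ hℓ
    exact hℓ f hf



/-- The dual (transpose) of a continuous endomorphism. -/
noncomputable def dualCLM (P : E →L[ℝ] E) : StrongDual ℝ E →L[ℝ] StrongDual ℝ E :=
  LinearMap.mkContinuous
    { toFun := fun ℓ => ℓ.comp P
      map_add' := fun a b => by ext x; simp
      map_smul' := fun c a => by ext x; simp }
    ‖P‖ (fun ℓ => by
      calc ‖ℓ.comp P‖ ≤ ‖ℓ‖ * ‖P‖ := ContinuousLinearMap.opNorm_comp_le _ _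
      _ = ‖P‖ * ‖ℓ‖ := mul_comm _ _)

@[simp] lemma dualCLM_apply (P : E →L[ℝ] E) (ℓ : StrongDual ℝ E) : dualCLM P ℓ = ℓ.comp P := rfl

lemma norm_dualCLM_le (P : E →L[ℝ] E) : ‖dualCLM P‖ ≤ ‖P‖ :=
  LinearMap.mkContinuous_norm_le _ (norm_nonneg P) _

lemma norm_inclusionInDoubleDual (x : E) : ‖inclusionInDoubleDual ℝ E x‖ = ‖x‖ :=
  (inclusionInDoubleDualLi ℝ (E := E)).norm_map x

lemma biDual_inclusion (P : E →L[ℝ] E) (x : E) :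
    dualCLM (dualCLM P) (inclusionInDoubleDual ℝ E x) = inclusionInDoubleDual ℝ E (P x) := by
  ext ℓ
  rfl

lemma norm_biDual (P : E →L[ℝ] E) : ‖dualCLM (dualCLM P)‖ = ‖P‖ := by
  refine le_antisymm ((norm_dualCLM_le _).trans (norm_dualCLM_le _)) ?_
  refine ContinuousLinearMap.opNorm_le_bound _ (norm_nonneg (dualCLM (dualCLM P))) fun x => ?_
  calc ‖P x‖ = ‖inclusionInDoubleDual ℝ E (P x)‖ := (norm_inclusionInDoubleDual _).symm
    _ = ‖dualCLM (dualCLM P) (inclusionInDoubleDual ℝ E x)‖ := by rw [biDual_inclusion]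
    _ ≤ ‖dualCLM (dualCLM P)‖ * ‖inclusionInDoubleDual ℝ E x‖ :=
        ContinuousLinearMap.le_opNorm _ _
    _ = ‖dualCLM (dualCLM P)‖ * ‖x‖ := by rw [norm_inclusionInDoubleDual]

/-- The set of norms of projections onto `W`. -/
abbrev projConstSet {Y : Type*} [NormedAddCommGroup Y] [NormedSpace ℝ Y]
    (W : Submodule ℝ Y) : Set ℝ :=
  {c | ∃ P : Y →L[ℝ] Y, P.comp P = P ∧ LinearMap.range (P : Y →ₗ[ℝ] Y) = W ∧ ‖P‖ = c}

end Aux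


/-- Theorem (modified Theorem 3.2): if `F ⊆ X**` is finite-dimensional and its
pre-annihilator `F₀ ⊆ X*` is weak-star closed, then `V = (F₀)₀` satisfies
`dim V = dim F` and `λ(V, X) = λ(F, X**)`. -/
theorem finrank_eq_and_relProjConst_eq (X : Type*) [NormedAddCommGroup X]
    [NormedSpace ℝ X] [CompleteSpace X]
    (F : Submodule ℝ (StrongDual ℝ (StrongDual ℝ X)))
    (hFfd : Module.Finite ℝ F)
    (hF₀ : IsWeakStarClosed (preAnn F)) :
    Module.finrank ℝ (preAnn (preAnn F)) = Module.finrank ℝ F ∧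
      relProjConst (Y := X) (preAnn (preAnn F)) = relProjConst (Y := StrongDual ℝ (StrongDual ℝ X)) F := by
  classical
  haveI := hFfd
  set V : Submodule ℝ X := preAnn (preAnn F) with hV
  set J : X →L[ℝ] StrongDual ℝ (StrongDual ℝ X) := inclusionInDoubleDual ℝ X with hJdef
  have hbipolar : ann (preAnn F) = F := ann_preAnn_eq_of_finiteDimensional F
  have hJinj : Function.Injective J := (inclusionInDoubleDualLi ℝ (E := X)).injective
  have hJV : ∀ v ∈ V, J v ∈ F := by
    intro v hv
    rw [← hbipolar]
    intro ℓ hℓ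
    exact hv ℓ hℓ
  set ι : V →ₗ[ℝ] F :=
    LinearMap.codRestrict F (J.toLinearMap ∘ₗ V.subtype) (fun v => hJV v.1 v.2) with hι
  have hιinj : Function.Injective ι := by
    intro a b hab
    have : J a.1 = J b.1 := congrArg Subtype.val hab
    exact Subtype.ext (hJinj this)
  letI : AddCommGroup F := Submodule.addCommGroup (M := StrongDual ℝ (StrongDual ℝ X)) F
  haveI hVfd : FiniteDimensional ℝ V := FiniteDimensional.of_injective ι hιinj
  have hannV : preAnn F = ann V := by
    apply le_antisymm
    · intro ℓ hℓ v hv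
      exact hv ℓ hℓ
    · intro ℓ hℓ
      exact mem_of_weakStarClosed hF₀ (fun x hx => hℓ x hx)
  -- surjectivity of ι : every element of F comes from V
  have hFsurj : ∀ f ∈ F, ∃ v ∈ V, J v = f := by
    intro f hf
    set ρ : StrongDual ℝ X →ₗ[ℝ] Module.Dual ℝ V :=
      V.subtype.dualMap ∘ₗ ContinuousLinearMap.coeLM ℝ with hρ
    have hρsurj : Function.Surjective ρ :=
      (SeparatingDual.dualMap_surjective_iff (R := ℝ) (V := X)
        (f := V.subtype)).mpr Subtype.val_injective
    have hker : LinearMap.ker ρ ≤ LinearMap.ker (ContinuousLinearMap.coeLM ℝ f) := by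
      intro ℓ hℓ
      have hℓV : ℓ ∈ ann V := by
        intro v hv
        exact congrFun (congrArg DFunLike.coe hℓ) ⟨v, hv⟩
      rw [LinearMap.mem_ker]
      have : ℓ ∈ preAnn F := by rw [hannV]; exact hℓV
      exact this f hf
    set e := ρ.quotKerEquivOfSurjective hρsurj with he
    set φ : Module.Dual ℝ V →ₗ[ℝ] ℝ :=
      ((LinearMap.ker ρ).liftQ (ContinuousLinearMap.coeLM ℝ f) hker) ∘ₗ
        (e.symm : Module.Dual ℝ V →ₗ[ℝ] (StrongDual ℝ X ⧸ LinearMap.ker ρ)) with hφ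
    have hφρ : ∀ ℓ : StrongDual ℝ X, φ (ρ ℓ) = f ℓ := by
      intro ℓ
      have h1 : e ((LinearMap.ker ρ).mkQ ℓ) = ρ ℓ := rfl
      have h2 : e.symm (ρ ℓ) = (LinearMap.ker ρ).mkQ ℓ := by
        rw [← h1, LinearEquiv.symm_apply_apply]
      simp only [hφ, LinearMap.comp_apply, LinearEquiv.coe_coe, h2]
      rfl
    set v : V := (Module.evalEquiv ℝ V).symm φ with hv
    refine ⟨v.1, v.2, ?_⟩
    ext ℓ
    have h3 : (ρ ℓ) v = φ (ρ ℓ) := Module.apply_evalEquiv_symm_apply ℝ V (ρ ℓ) φ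
    have h4 : (ρ ℓ) v = ℓ v.1 := rfl
    rw [hJdef]
    rw [dual_def]
    rw [← h4, h3, hφρ]
  have hιbij : Function.Bijective ι := by
    refine ⟨hιinj, fun g => ?_⟩
    obtain ⟨w, hwV, hwJ⟩ := hFsurj g.1 g.2
    exact ⟨⟨w, hwV⟩, Subtype.ext hwJ⟩
  constructor
  · exact (LinearEquiv.ofBijective ι hιbij).finrank_eq
  -- projection constants
  · set A := {c | ∃ P : X →L[ℝ] X, P.comp P = P ∧ LinearMap.range (P : X →ₗ[ℝ] X) = V ∧ ‖P‖ = c} with hA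
    set B := projConstSet (Y := StrongDual ℝ (StrongDual ℝ X)) F with hB
    have hAB : A ⊆ B := by
      rintro c ⟨P, hPP, hPr, hPn⟩
      refine ⟨dualCLM (dualCLM P), ?_, ?_, by rw [norm_biDual]; exact hPn⟩
      · ext f ℓ
        have : (ℓ.comp P).comp P = ℓ.comp P := by rw [ContinuousLinearMap.comp_assoc, hPP]
        simp only [ContinuousLinearMap.comp_apply, dualCLM_apply]
        rw [this]
      · apply le_antisymm
        · rintro g ⟨f, rfl⟩
          rw [← hbipolar]
          intro ℓ hℓ
          have hc : ℓ.comp P = 0 := by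
            ext x
            have hPx : P x ∈ V := by rw [← hPr]; exact ⟨x, rfl⟩
            have hℓV : ℓ ∈ ann V := by rw [← hannV]; exact hℓ
            exact hℓV (P x) hPx
          show f ((dualCLM P) ℓ) = 0
          rw [dualCLM_apply, hc, map_zero]
        · intro f hf
          obtain ⟨w, hwV, hwJ⟩ := hFsurj f hf
          refine ⟨f, ?_⟩
          have hPw : P w = w := by
            have : w ∈ LinearMap.range (P : X →ₗ[ℝ] X) := by rw [hPr]; exact hwV
            obtain ⟨z, hz⟩ := this
            rw [ContinuousLinearMap.coe_coe] at hz
            have := congrArg P hz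
            rw [← ContinuousLinearMap.comp_apply, hPP] at this
            rw [hz] at this
            exact this.symm
          ext ℓ
          rw [← hwJ]
          show (J w) (ℓ.comp P) = J w ℓ
          rw [hJdef]
          simp only [dual_def, ContinuousLinearMap.comp_apply, hPw]
    have hApos : ∀ c ∈ A, (0:ℝ) ≤ c := by rintro c ⟨P, _, _, hn⟩; rw [← hn]; exact norm_nonneg P
    have hBpos : ∀ c ∈ B, (0:ℝ) ≤ c := by rintro c ⟨P, _, _, hn⟩; rw [← hn]; exact norm_nonneg P
    have hBA : ∀ c ∈ B, ∃ a ∈ A, a ≤ c := by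
      rintro c ⟨Q, hQQ, hQr, hQn⟩
      set EVF := LinearEquiv.ofBijective ι hιbij with hEVF
      have hQJF : ∀ x : X, Q (J x) ∈ F := by
        intro x
        rw [← hQr]; exact ⟨J x, rfl⟩
      set Qx : X →ₗ[ℝ] F :=
        LinearMap.codRestrict F ((Q.comp J).toLinearMap) (fun x => hQJF x) with hQx
      set Plin : X →ₗ[ℝ] X := V.subtype ∘ₗ (EVF.symm : F →ₗ[ℝ] V) ∘ₗ Qx with hPlin
      have hJP : ∀ x : X, J (Plin x) = Q (J x) := by
        intro x
        have h5 : ι (EVF.symm (Qx x)) = Qx x := by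
          have := EVF.apply_symm_apply (Qx x)
          exact this
        have h6 : J ((EVF.symm (Qx x)) : X) = ((Qx x : F) : StrongDual ℝ (StrongDual ℝ X)) :=
          congrArg Subtype.val h5
        exact h6
      have hbound : ∀ x : X, ‖Plin x‖ ≤ ‖Q‖ * ‖x‖ := by
        intro x
        calc ‖Plin x‖ = ‖J (Plin x)‖ := (norm_inclusionInDoubleDual _).symm
          _ = ‖Q (J x)‖ := by rw [hJP]
          _ ≤ ‖Q‖ * ‖J x‖ := ContinuousLinearMap.le_opNorm _ _
          _ = ‖Q‖ * ‖x‖ := by rw [hJdef, norm_inclusionInDoubleDual]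
      set P : X →L[ℝ] X := Plin.mkContinuous ‖Q‖ hbound with hP
      have hPapp : ∀ x, P x = Plin x := fun x => rfl
      have hJP' : ∀ x : X, J (P x) = Q (J x) := fun x => hJP x
      refine ⟨‖P‖, ⟨P, ?_, ?_, rfl⟩, ?_⟩
      · ext x
        apply hJinj
        rw [ContinuousLinearMap.comp_apply, hJP', hJP', ← ContinuousLinearMap.comp_apply, hQQ]
      · apply le_antisymm
        · rintro y ⟨x, rfl⟩
          rw [ContinuousLinearMap.coe_coe, hPapp]
          exact Submodule.coe_mem _
        · intro w hw
          have hJwF : J w ∈ F := hJV w hw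
          have hQJw : Q (J w) = J w := by
            have : J w ∈ LinearMap.range (Q : StrongDual ℝ (StrongDual ℝ X) →ₗ[ℝ] StrongDual ℝ (StrongDual ℝ X)) := by rw [hQr]; exact hJwF
            obtain ⟨z, hz⟩ := this
            rw [ContinuousLinearMap.coe_coe] at hz
            have := congrArg Q hz
            rw [← ContinuousLinearMap.comp_apply, hQQ] at this
            rw [hz] at this
            exact this.symm
          refine ⟨w, ?_⟩
          apply hJinj
          rw [ContinuousLinearMap.coe_coe, hJP', hQJw]
      · rw [← hQn]
        exact Plin.mkContinuous_norm_le (norm_nonneg Q) hbound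
    show sInf A = sInf B
    rcases Set.eq_empty_or_nonempty A with hAe | hAne
    · have hBe : B = ∅ := by
        rw [Set.eq_empty_iff_forall_notMem]
        intro c hc
        obtain ⟨a, ha, _⟩ := hBA c hc
        rw [hAe] at ha
        exact ha
      rw [hAe, hBe]
    · have hBne : B.Nonempty := ⟨_, hAB hAne.choose_spec⟩
      have hAbdd : BddBelow A := ⟨0, fun c hc => hApos c hc⟩
      have hBbdd : BddBelow B := ⟨0, fun c hc => hBpos c hc⟩
      apply le_antisymm
      · refine le_csInf hBne fun b hb => ?_
        obtain ⟨a, haA, hab⟩ := hBA b hb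
        exact (csInf_le hAbdd haA).trans hab
      · exact csInf_le_csInf hBbdd hAne (fun c hc => hAB hc)
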